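/- Let α > 0 and R > 0. Then lim_{y → 0⁺} (1/y) · (2/R²) ∫_0^R (1 - e^{-(1+r^α) y}) r dr = 1 + 2R^α/(α+2). Equivalently, the unordered channel-gain CDF F(y) = (2/R²) ∫_0^R (1 - e^{-(1+r^α) y}) r dr satisfies F(y) = ℓ·y + o(y) as y → 0⁺, with ℓ = 1 + 2R^α/(α+2). -/

import Mathlib

open Filter Real

theorem channel_gain_cdf_small_y_asymptotics (α R : ℝ) (hα : 0 < α) (hR : 0 < R) :
    Filter.Tendsto
      (fun y : ℝ =>
        (1 / y) * ((2 / R ^ 2) * ∫ r in (0 : ℝ)..R, (1 - Real.exp (-((1 + r ^ α) * y))) * r))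
      (nhdsWithin 0 (Set.Ioi 0))
      (nhds (1 + 2 * R ^ α / (α + 2))) := by
  have hR2 : (0:ℝ) < R ^ 2 := by positivity
  have hcont_rpow : Continuous fun r : ℝ => r ^ α := by
    rw [continuous_iff_continuousAt]
    intro x
    exact Real.continuousAt_rpow_const x α (Or.inr hα.le)
  -- key dominated convergence limit
  have key : Tendsto
      (fun y : ℝ => ∫ r in (0:ℝ)..R, (1 - Real.exp (-((1 + r ^ α) * y))) * r / y)
      (nhdsWithin 0 (Set.Ioi 0)) (nhds (∫ r in (0:ℝ)..R, (1 + r ^ α) * r)) := by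
    apply intervalIntegral.tendsto_integral_filter_of_dominated_convergence
      (bound := fun r => (1 + r ^ α) * r)
    · filter_upwards with y
      have hc : Continuous fun r : ℝ => (1 - Real.exp (-((1 + r ^ α) * y))) * r / y := by
        apply Continuous.div_const
        exact (continuous_const.sub (Real.continuous_exp.comp
          (((continuous_const.add hcont_rpow).mul continuous_const).neg))).mul continuous_id
      exact hc.aestronglyMeasurable
    · filter_upwards [self_mem_nhdsWithin] with y hy
      have hy' : (0:ℝ) < y := hy
      refine MeasureTheory.ae_of_all _ fun r hr => ?_
      rw [Set.uIoc_of_le hR.le] at hr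
      have hr0 : 0 < r := hr.1
      have hc : (0:ℝ) ≤ 1 + r ^ α := by positivity
      have hle : 1 - Real.exp (-((1 + r ^ α) * y)) ≤ (1 + r ^ α) * y := by
        nlinarith [Real.add_one_le_exp (-((1 + r ^ α) * y))]
      have hnn : 0 ≤ 1 - Real.exp (-((1 + r ^ α) * y)) := by
        have : Real.exp (-((1 + r ^ α) * y)) ≤ 1 := by
          rw [Real.exp_le_one_iff]
          nlinarith
        linarith
      rw [Real.norm_eq_abs, abs_of_nonneg (by positivity), div_le_iff₀ hy']
      nlinarith
    · apply Continuous.intervalIntegrable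
      exact (continuous_const.add hcont_rpow).mul continuous_id
    · refine MeasureTheory.ae_of_all _ fun r hr => ?_
      set c : ℝ := 1 + r ^ α with hc
      have hd : HasDerivAt (fun y : ℝ => 1 - Real.exp (-(c * y))) c 0 := by
        have h1 : HasDerivAt (fun y : ℝ => c * y) c 0 := by
          simpa using (hasDerivAt_id (0:ℝ)).const_mul c
        have h2 : HasDerivAt (fun y : ℝ => Real.exp (-(c * y))) (-c) 0 := by
          have := (h1.neg).exp
          simpa using this
        have := (hasDerivAt_const (0:ℝ) (1:ℝ)).sub h2
        simp at this; exact this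
      have hslope := hasDerivAt_iff_tendsto_slope.mp hd
      have hmono : nhdsWithin (0:ℝ) (Set.Ioi 0) ≤ nhdsWithin (0:ℝ) {(0:ℝ)}ᶜ :=
        nhdsWithin_mono 0 (fun x hx => ne_of_gt hx)
      have hs : Tendsto (fun y : ℝ => (1 - Real.exp (-(c * y))) / y)
          (nhdsWithin 0 (Set.Ioi 0)) (nhds c) := by
        have := hslope.mono_left hmono
        refine this.congr' ?_
        filter_upwards [self_mem_nhdsWithin] with y hy
        simp [slope, Real.exp_zero, div_eq_inv_mul]
      have := hs.mul_const r
      refine this.congr (fun y => by ring)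
  -- compute the limiting integral
  have hint : (∫ r in (0:ℝ)..R, (1 + r ^ α) * r) = R ^ 2 / 2 + R ^ (α + 2) / (α + 2) := by
    have hcongr : Set.EqOn (fun r : ℝ => (1 + r ^ α) * r)
        (fun r : ℝ => r + r ^ (α + 1)) (Set.uIcc 0 R) := by
      intro r hr
      rw [Set.uIcc_of_le hR.le] at hr
      rcases eq_or_lt_of_le hr.1 with h | h
      · simp [← h, Real.zero_rpow hα.ne', Real.zero_rpow (by positivity : α + 1 ≠ 0)]
      · have : r ^ (α + 1) = r ^ α * r := by
          rw [Real.rpow_add h, Real.rpow_one]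
        simp only [this]
        ring
    rw [intervalIntegral.integral_congr hcongr]
    rw [intervalIntegral.integral_add intervalIntegral.intervalIntegrable_id
      (intervalIntegral.intervalIntegrable_rpow (by left; linarith))]
    rw [integral_id, _root_.integral_rpow (by left; linarith)]
    rw [Real.zero_rpow (by positivity : α + 1 + 1 ≠ 0)]
    norm_num
    ring_nf
  rw [hint] at key
  -- assemble
  have hfinal := key.const_mul (2 / R ^ 2)
  have heq : (2 / R ^ 2) * (R ^ 2 / 2 + R ^ (α + 2) / (α + 2)) = 1 + 2 * R ^ α / (α + 2) := by
    have hRpow : R ^ (α + 2) = R ^ α * R ^ 2 := by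
      rw [Real.rpow_add hR, ← Real.rpow_natCast R 2]
      norm_num
    rw [hRpow]
    field_simp
  rw [heq] at hfinal
  refine hfinal.congr' ?_
  filter_upwards [self_mem_nhdsWithin] with y hy
  rw [intervalIntegral.integral_div]
  ring
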